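/- The map Ψ : (0,∞) × ℝ → ℝ² \ {0} defined by x = c^{1/3} ρ^{1/3} C(θT_*), y = c^{2/3} ρ^{2/3} S(θT_*), with c = 3/T_*, has Jacobian determinant of absolute value 1 wherever defined (it is measure preserving). -/

import Mathlib

lemma det_clm_two (L : ℝ × ℝ →L[ℝ] ℝ × ℝ) :
    L.det = (L (1, 0)).1 * (L (0, 1)).2 - (L (1, 0)).2 * (L (0, 1)).1 := by
  have : L.det = LinearMap.det (L : (ℝ × ℝ) →ₗ[ℝ] (ℝ × ℝ)) := rfl
  rw [this, ← LinearMap.det_toMatrix (Module.Basis.finTwoProd ℝ), Matrix.det_fin_two]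
  simp [LinearMap.toMatrix_apply, Module.Basis.finTwoProd_zero, Module.Basis.finTwoProd_one]
  ring


lemma energy_const (C S : ℝ → ℝ)
    (hC : ∀ t, HasDerivAt C (S t) t)
    (hS : ∀ t, HasDerivAt S (-(C t) ^ 3) t)
    (hC0 : C 0 = 1) (hS0 : S 0 = 0) :
    ∀ t, 2 * S t ^ 2 + C t ^ 4 = 1 := by
  intro t
  set g : ℝ → ℝ := fun t => 2 * S t ^ 2 + C t ^ 4 with hg
  have hd : ∀ u, HasDerivAt g 0 u := by
    intro u
    have h1 : HasDerivAt g (2 * ((2 : ℕ) * S u ^ 1 * (-(C u) ^ 3)) + (4 : ℕ) * C u ^ 3 * S u) u :=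
      (((hS u).pow 2).const_mul 2).add ((hC u).pow 4)
    convert h1 using 1
    push_cast
    ring
  have := is_const_of_deriv_eq_zero (fun u => (hd u).differentiableAt) (fun u => (hd u).deriv) t 0
  simpa [hg, hC0, hS0] using this

/-- The action-angle map `Ψ(ρ,θ) = (c^{1/3}ρ^{1/3}C(θT_*), c^{2/3}ρ^{2/3}S(θT_*))`,
with `c = 3/T_*` and `(C,S)` the solution of `Ċ = S`, `Ṡ = −C³` with
`(C(0),S(0)) = (1,0)` of minimal period `T_*`, has Jacobian determinant of absolute
value `1` wherever defined. -/
theorem action_angle_measure_preserving (C S : ℝ → ℝ)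
    (hC : ∀ t, HasDerivAt C (S t) t)
    (hS : ∀ t, HasDerivAt S (-(C t) ^ 3) t)
    (hC0 : C 0 = 1) (hS0 : S 0 = 0)
    (T : ℝ) (hT : 0 < T)
    (hperC : Function.Periodic C T) (hperS : Function.Periodic S T)
    (Ψ : ℝ × ℝ → ℝ × ℝ)
    (hΨ : Ψ = fun p =>
      ((3 / T) ^ ((1 : ℝ) / 3) * p.1 ^ ((1 : ℝ) / 3) * C (p.2 * T),
       (3 / T) ^ ((2 : ℝ) / 3) * p.1 ^ ((2 : ℝ) / 3) * S (p.2 * T))) :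
    ∀ p : ℝ × ℝ, 0 < p.1 → |(fderiv ℝ Ψ p).det| = 1 := by
  have inv1 := energy_const C S hC hS hC0 hS0
  intro p hp
  set a : ℝ := (3 / T) ^ ((1 : ℝ) / 3) with ha
  set b : ℝ := (3 / T) ^ ((2 : ℝ) / 3) with hb
  have hx1 : HasFDerivAt (fun q : ℝ × ℝ => a * q.1 ^ ((1 : ℝ) / 3))
      ((a * ((1 : ℝ) / 3 * p.1 ^ ((1 : ℝ) / 3 - 1))) • ContinuousLinearMap.fst ℝ ℝ ℝ) p := by
    have h0 : HasDerivAt (fun x : ℝ => a * x ^ ((1 : ℝ) / 3))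
        (a * ((1 : ℝ) / 3 * p.1 ^ ((1 : ℝ) / 3 - 1))) p.1 :=
      (Real.hasDerivAt_rpow_const (p := (1 : ℝ) / 3) (Or.inl hp.ne')).const_mul a
    have := h0.comp_hasFDerivAt p (hasFDerivAt_fst : HasFDerivAt _ (ContinuousLinearMap.fst ℝ ℝ ℝ) p)
    exact this
  have hx2 : HasFDerivAt (fun q : ℝ × ℝ => b * q.1 ^ ((2 : ℝ) / 3))
      ((b * ((2 : ℝ) / 3 * p.1 ^ ((2 : ℝ) / 3 - 1))) • ContinuousLinearMap.fst ℝ ℝ ℝ) p := by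
    have h0 : HasDerivAt (fun x : ℝ => b * x ^ ((2 : ℝ) / 3))
        (b * ((2 : ℝ) / 3 * p.1 ^ ((2 : ℝ) / 3 - 1))) p.1 :=
      (Real.hasDerivAt_rpow_const (p := (2 : ℝ) / 3) (Or.inl hp.ne')).const_mul b
    have := h0.comp_hasFDerivAt p (hasFDerivAt_fst : HasFDerivAt _ (ContinuousLinearMap.fst ℝ ℝ ℝ) p)
    exact this
  have hCc : HasFDerivAt (fun q : ℝ × ℝ => C (q.2 * T))
      ((S (p.2 * T) * (1 * T)) • ContinuousLinearMap.snd ℝ ℝ ℝ) p :=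
    ((hC (p.2 * T)).comp p.2 ((hasDerivAt_id p.2).mul_const T)).comp_hasFDerivAt p
      (hasFDerivAt_snd : HasFDerivAt _ (ContinuousLinearMap.snd ℝ ℝ ℝ) p)
  have hSc : HasFDerivAt (fun q : ℝ × ℝ => S (q.2 * T))
      ((-(C (p.2 * T)) ^ 3 * (1 * T)) • ContinuousLinearMap.snd ℝ ℝ ℝ) p :=
    ((hS (p.2 * T)).comp p.2 ((hasDerivAt_id p.2).mul_const T)).comp_hasFDerivAt p
      (hasFDerivAt_snd : HasFDerivAt _ (ContinuousLinearMap.snd ℝ ℝ ℝ) p)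
  have hΨ' : HasFDerivAt Ψ
      (ContinuousLinearMap.prod
        ((a * p.1 ^ ((1 : ℝ) / 3)) • (S (p.2 * T) * (1 * T)) • ContinuousLinearMap.snd ℝ ℝ ℝ +
          C (p.2 * T) • (a * ((1 : ℝ) / 3 * p.1 ^ ((1 : ℝ) / 3 - 1))) •
            ContinuousLinearMap.fst ℝ ℝ ℝ)
        ((b * p.1 ^ ((2 : ℝ) / 3)) • (-(C (p.2 * T)) ^ 3 * (1 * T)) •
            ContinuousLinearMap.snd ℝ ℝ ℝ +
          S (p.2 * T) • (b * ((2 : ℝ) / 3 * p.1 ^ ((2 : ℝ) / 3 - 1))) •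
            ContinuousLinearMap.fst ℝ ℝ ℝ)) p := by
    rw [hΨ]
    exact HasFDerivAt.prodMk (hx1.mul hCc) (hx2.mul hSc)
  have e1 : p.1 ^ ((1 : ℝ) / 3 - 1) * p.1 ^ ((2 : ℝ) / 3) = 1 := by
    rw [← Real.rpow_add hp]; norm_num
  have e2 : p.1 ^ ((2 : ℝ) / 3 - 1) * p.1 ^ ((1 : ℝ) / 3) = 1 := by
    rw [← Real.rpow_add hp]; norm_num
  have e3 : a * b * T = 3 := by
    rw [ha, hb, ← Real.rpow_add (by positivity)]
    norm_num
    field_simp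
  have h4 := inv1 (p.2 * T)
  have hdet : (fderiv ℝ Ψ p).det = -1 := by
    rw [hΨ'.fderiv, det_clm_two]
    simp only [ContinuousLinearMap.add_apply, ContinuousLinearMap.smul_apply,
      ContinuousLinearMap.prod_apply, ContinuousLinearMap.coe_fst',
      ContinuousLinearMap.coe_snd', smul_eq_mul]
    linear_combination (-(C (p.2 * T) ^ 4)) * e1 +
      (-2 * S (p.2 * T) ^ 2) * e2 +
      (-(1/3) * C (p.2 * T) ^ 4 * p.1 ^ ((1:ℝ)/3 - 1) * p.1 ^ ((2:ℝ)/3)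
        - (2/3) * S (p.2 * T) ^ 2 * p.1 ^ ((2:ℝ)/3 - 1) * p.1 ^ ((1:ℝ)/3)) * e3 - h4
  rw [hdet]; norm_num
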